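/- Let A be a Noetherian local ring with maximal ideal m and residue field k = A/m, and let p be a prime ideal of A such that A/p is regular and A is normally flat along p. Then the graded k-algebra G_p(A) ⊗_{A/p} k and the graded k(p)-algebra G(A_p) (the associated graded ring of the localization A_p with respect to its maximal ideal pA_p) have the same Hilbert function: dim_k (p^n/p^{n+1} ⊗_{A/p} k) = dim_{k(p)} ((pA_p)^n/(pA_p)^{n+1}) for all n ≥ 0. -/

import Mathlib

open IsLocalRing Polynomial

set_option synthInstance.maxHeartbeats 1000000
set_option maxHeartbeats 1000000

section HilbertSamuel

variable (R : Type*) [CommRing R] (I : Ideal R)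

/-- The Hilbert function of the ring `R` with respect to the ideal `I`:
`n ↦ dim_{R/I} (Iⁿ/Iⁿ⁺¹)`. -/
noncomputable def hilbertFn (n : ℕ) : ℕ :=
  Module.finrank (R ⧸ I) ((↥(I ^ n)) ⧸ (I • (⊤ : Submodule R ↥(I ^ n))))

/-- Forward difference operator on integer sequences. -/
def intDiff (f : ℕ → ℤ) : ℕ → ℤ := fun n => f (n + 1) - f n

/-- The Hilbert–Samuel multiplicity of `R` with respect to `I` (intended for the case
where `I` is the maximal ideal of a local ring `R`): the `d`-th finite difference
(`d = dim R`) of the Hilbert–Samuel function `n ↦ length (R / Iⁿ⁺¹) = ∑_{i ≤ n} dim Iⁱ/Iⁱ⁺¹`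
is eventually constant, with value the multiplicity. -/
noncomputable def hsMultiplicity : ℕ :=
  sInf {e : ℕ | ∀ᶠ n in Filter.atTop,
    (intDiff^[(ENat.toNat (WithBot.unbotD 0 (ringKrullDim R)))]
      (fun m => ((Finset.range (m + 1)).sum fun i => (hilbertFn R I i : ℤ)))) n = (e : ℤ)}

/-- The multiplicity `e(A)` of a local ring `A`. -/
noncomputable abbrev multiplicity' (A : Type*) [CommRing A] [IsLocalRing A] : ℕ :=
  hsMultiplicity A (maximalIdeal A)

/-- The embedding dimension of a local ring. -/
noncomputable abbrev embDim (A : Type*) [CommRing A] [IsLocalRing A] : ℕ :=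
  hilbertFn A (maximalIdeal A) 1

end HilbertSamuel

section Henselization

universe u

/-- `B` (an `A`-algebra) is *the henselization* of the local ring `A`: it is a henselian
local ring, local and flat over `A`, with `𝔪_B = 𝔪_A B` and the same residue field,
which is universal among henselian local rings receiving a local homomorphism from `A`. -/
structure IsHenselization (A : Type u) (B : Type u) [CommRing A] [IsLocalRing A]
    [CommRing B] [IsLocalRing B] [Algebra A B] : Prop where
  henselian : HenselianLocalRing B
  flat : Module.Flat A B
  isLocalHom : IsLocalHom (algebraMap A B)
  maximalIdeal_map :
    (maximalIdeal A).map (algebraMap A B) = maximalIdeal B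
  residue_surjective :
    ∀ b : B, ∃ a : A, b - algebraMap A B a ∈ maximalIdeal B
  universal : ∀ (C : Type u) [CommRing C] [IsLocalRing C], HenselianLocalRing C →
    ∀ (g : A →+* C), IsLocalHom g →
      ∃! h : B →+* C, IsLocalHom h ∧ h.comp (algebraMap A B) = g

/-- `B` (an `A`-algebra) is *a strict henselization* of the local ring `A`: a henselian
local ring, local and flat over `A`, with `𝔪_B = 𝔪_A B`, whose residue field is a
separable closure of that of `A` (it is separably closed, and every element of `B` is,
modulo `𝔪_B`, a root of a monic polynomial over `A` which is separable modulo `𝔪_A`),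
satisfying the existence part of the universal property of the strict henselization. -/
structure IsStrictHenselization (A : Type u) (B : Type u) [CommRing A] [IsLocalRing A]
    [CommRing B] [IsLocalRing B] [Algebra A B] : Prop where
  henselian : HenselianLocalRing B
  flat : Module.Flat A B
  isLocalHom : IsLocalHom (algebraMap A B)
  maximalIdeal_map :
    (maximalIdeal A).map (algebraMap A B) = maximalIdeal B
  sepClosed_residue : IsSepClosed (ResidueField B)
  residue_sepAlgebraic :
    ∀ b : B, ∃ p : Polynomial A, p.Monic ∧ (p.map (residue A)).Separable ∧
      Polynomial.aeval b p ∈ maximalIdeal B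
  universal : ∀ (C : Type u) [CommRing C] [IsLocalRing C], HenselianLocalRing C →
    IsSepClosed (ResidueField C) →
    ∀ (g : A →+* C), IsLocalHom g →
      ∃ h : B →+* C, IsLocalHom h ∧ h.comp (algebraMap A B) = g

end Henselization

section Normalization

variable (A : Type*) [CommRing A] [IsLocalRing A]

/-- The normalization of a (reduced) ring: the integral closure of `A` in its total
ring of fractions. -/
noncomputable abbrev Normalization : Type _ := ↥(integralClosure A (FractionRing A))

/-- The extension `𝔪 Ā` of the maximal ideal of `A` to the normalization `Ā`. -/
noncomputable def extendedMaximalIdeal : Ideal (Normalization A) :=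
  (maximalIdeal A).map (algebraMap A (Normalization A))

/-- The ring `Ā / 𝔪 Ā`.  The *branches* of `Spec A` at its closed point are the points of
its prime spectrum. -/
noncomputable abbrev BranchRing : Type _ := Normalization A ⧸ extendedMaximalIdeal A

noncomputable instance branchRingAlgebra : Algebra (ResidueField A) (BranchRing A) :=
  (Ideal.Quotient.lift (maximalIdeal A)
    ((Ideal.Quotient.mk (extendedMaximalIdeal A)).comp
      (algebraMap A (Normalization A)))
    (fun a ha => by
      exact Ideal.Quotient.eq_zero_iff_mem.mpr
        (Ideal.mem_map_of_mem (algebraMap A (Normalization A)) ha))).toAlgebra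
      (S := BranchRing A)

noncomputable instance branchRingModule : Module (ResidueField A) (BranchRing A) :=
  @Algebra.toModule _ _ _ _ (branchRingAlgebra A)

/-- The ring `(Ā / 𝔪 Ā) ⊗_{k(𝔪)} K`, where `K` is an algebraic closure of the residue
field `k(𝔪)`.  The *geometric branches* of `Spec A` at its closed point are the points of
its prime spectrum. -/
noncomputable abbrev GeomBranchRing : Type _ :=
  TensorProduct (ResidueField A) (AlgebraicClosure (ResidueField A)) (BranchRing A)

end Normalization

section AssociatedGraded

variable (R : Type*) [CommRing R] (I : Ideal R)

/-- The ideal `I · R[It]` of the Rees algebra `R[It]`. -/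
noncomputable def grIdeal : Ideal (reesAlgebra I) :=
  I.map (algebraMap R (reesAlgebra I))

/-- The associated graded ring `G_I(R) = ⊕ₙ Iⁿ/Iⁿ⁺¹`, realized as `R[It]/(I · R[It])`. -/
noncomputable abbrev GrRing : Type _ := reesAlgebra I ⧸ grIdeal R I

/-- `G_I(R)` is an algebra over `R/I`. -/
noncomputable instance grRingAlgebra : Algebra (R ⧸ I) (GrRing R I) :=
  (Ideal.Quotient.lift I
    ((Ideal.Quotient.mk (grIdeal R I)).comp (algebraMap R (reesAlgebra I)))
    (fun a ha => by
      exact Ideal.Quotient.eq_zero_iff_mem.mpr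
        (Ideal.mem_map_of_mem (algebraMap R (reesAlgebra I)) ha))).toAlgebra
      (S := GrRing R I)

noncomputable instance grRingModule : Module (R ⧸ I) (GrRing R I) :=
  @Algebra.toModule _ _ _ _ (grRingAlgebra R I)

/-- The image in `G_I(R)` of the degree `n` homogeneous component `Iⁿ/Iⁿ⁺¹`. -/
noncomputable def grDegSet (n : ℕ) : Set (GrRing R I) :=
  (Ideal.Quotient.mk (grIdeal R I)) ''
    {x : reesAlgebra I | ∃ a ∈ I ^ n, (x : Polynomial R) = Polynomial.monomial n a}

/-- The Hilbert function of the graded ring `G_I(R)`: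
the dimension over `R/I` of the degree `n` homogeneous component. -/
noncomputable def grHilbertFn (n : ℕ) : ℕ :=
  Module.finrank (R ⧸ I) ↥(Submodule.span (R ⧸ I) (grDegSet R I n))

/-- An ideal of the associated graded ring is *generated by linear forms* if it is
generated by a set of homogeneous elements of degree one.  The subvariety of the
(tangent) cone `Spec G_I(R)` it defines is a *linear variety*. -/
def IsGeneratedByLinearForms (q : Ideal (GrRing R I)) : Prop :=
  ∃ s ⊆ grDegSet R I 1, q = Ideal.span s

end AssociatedGraded

section GrLocal

variable (A : Type*) [CommRing A] [IsLocalRing A]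

/-- The associated graded ring `G(A) = ⊕ 𝔪ⁿ/𝔪ⁿ⁺¹` of a local ring, i.e. the coordinate
ring of the tangent cone of `Spec A` at its closed point. -/
noncomputable abbrev GrLocalRing : Type _ := GrRing A (maximalIdeal A)

noncomputable instance grLocalAlgebra : Algebra (ResidueField A) (GrLocalRing A) :=
  grRingAlgebra A (maximalIdeal A)

noncomputable instance grLocalModule : Module (ResidueField A) (GrLocalRing A) :=
  @Algebra.toModule _ _ _ _ (grLocalAlgebra A)

/-- The base change `G(A) ⊗_{k(𝔪)} K` of the associated graded ring of a local ring to the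
algebraic closure `K` of the residue field `k(𝔪)`. -/
noncomputable abbrev GrLocalRingBar : Type _ :=
  TensorProduct (ResidueField A) (AlgebraicClosure (ResidueField A)) (GrLocalRing A)

noncomputable instance grLocalBarAlgebra :
    Algebra (ResidueField A) (GrLocalRingBar A) :=
  Algebra.TensorProduct.leftAlgebra (R := ResidueField A)
    (A := AlgebraicClosure (ResidueField A)) (B := GrLocalRing A) (S := ResidueField A)

noncomputable instance grLocalBarAlgebraK :
    Algebra (AlgebraicClosure (ResidueField A)) (GrLocalRingBar A) :=
  Algebra.TensorProduct.leftAlgebra (R := ResidueField A)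
    (A := AlgebraicClosure (ResidueField A)) (B := GrLocalRing A)
    (S := AlgebraicClosure (ResidueField A))

/-- The image in `G(A) ⊗_{k(𝔪)} K` of the degree `n` homogeneous component. -/
noncomputable def grBarDegSet (n : ℕ) : Set (GrLocalRingBar A) :=
  (Algebra.TensorProduct.includeRight (R := ResidueField A)
      (A := AlgebraicClosure (ResidueField A)) (B := GrLocalRing A)) ''
    grDegSet A (maximalIdeal A) n

/-- The Hilbert function of `G(A) ⊗_{k(𝔪)} K`. -/
noncomputable def grBarHilbertFn (n : ℕ) : ℕ :=
  Module.finrank (AlgebraicClosure (ResidueField A))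
    ↥(Submodule.span (AlgebraicClosure (ResidueField A)) (grBarDegSet A n))

end GrLocal

section GrMap

variable {R : Type*} [CommRing R] {T : Type*} [CommRing T]

/-- A ring homomorphism `f : R → T` with `f I ⊆ J` induces a homomorphism of Rees
algebras `R[It] → T[Jt]`. -/
noncomputable def reesMap (f : R →+* T) (I : Ideal R) (J : Ideal T)
    (h : ∀ a ∈ I, f a ∈ J) : ↥(reesAlgebra I) →+* ↥(reesAlgebra J) :=
  RingHom.codRestrict
    ((Polynomial.mapRingHom f).comp (Subsemiring.subtype (reesAlgebra I).toSubsemiring))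
    (reesAlgebra J).toSubsemiring
    (by
      rintro ⟨x, hx⟩
      show Polynomial.map f x ∈ reesAlgebra J
      rw [mem_reesAlgebra_iff]
      intro i
      rw [Polynomial.coeff_map]
      have hxi : x.coeff i ∈ I ^ i := (mem_reesAlgebra_iff I x).mp hx i
      exact Ideal.pow_right_mono (Ideal.map_le_iff_le_comap.mpr h) i
        (Ideal.map_pow f I i ▸ Ideal.mem_map_of_mem f hxi))

/-- A ring homomorphism `f : R → T` with `f I ⊆ J` induces a homomorphism of associated
graded rings `G_I(R) → G_J(T)`. -/
noncomputable def grMap (f : R →+* T) (I : Ideal R) (J : Ideal T)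
    (h : ∀ a ∈ I, f a ∈ J) : GrRing R I →+* GrRing T J :=
  Ideal.Quotient.lift (grIdeal R I)
    ((Ideal.Quotient.mk (grIdeal T J)).comp (reesMap f I J h))
    (by
      intro x hx
      have hle : grIdeal R I ≤
          RingHom.ker ((Ideal.Quotient.mk (grIdeal T J)).comp (reesMap f I J h)) := by
        refine Ideal.map_le_iff_le_comap.mpr (fun a ha => ?_)
        rw [Ideal.mem_comap, RingHom.mem_ker, RingHom.comp_apply]
        have heq : reesMap f I J h (algebraMap R (reesAlgebra I) a)
            = algebraMap T (reesAlgebra J) (f a) := by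
          apply Subtype.ext
          show Polynomial.map f (Polynomial.C a) = Polynomial.C (f a)
          exact Polynomial.map_C f
        rw [heq, Ideal.Quotient.eq_zero_iff_mem]
        exact Ideal.mem_map_of_mem (algebraMap T (reesAlgebra J)) (h a ha)
      exact hle hx)

end GrMap

section MoreDefs

/-- A commutative ring is a *regular local ring* if it is a Noetherian local ring whose
Krull dimension equals its embedding dimension `dim_k 𝔪/𝔪²`. -/
def IsRegularLocalRing' (R : Type*) [CommRing R] : Prop :=
  IsLocalRing R ∧ IsNoetherianRing R ∧
    ∀ I : Ideal R, I.IsMaximal → ringKrullDim R = (hilbertFn R I 1 : WithBot ℕ∞)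

/-- Given a quotient-like `A`-algebra `B ⧸ P` of a (strict) henselization `B` of `A` (so
that `P` is a minimal prime corresponding to a branch `γ`), the *tangent cone, as a set,
to the branch `γ`* viewed inside the tangent cone `Spec G(A)` of `Spec A`: the radical of
the kernel of the induced homomorphism `G(A) → G(B/P)` of associated graded rings. -/
noncomputable def branchTangent (A : Type*) [CommRing A] [IsLocalRing A]
    (B : Type*) [CommRing B] [Algebra A B] (P : Ideal B) : Ideal (GrLocalRing A) :=
  (RingHom.ker
    (grMap ((Ideal.Quotient.mk P).comp (algebraMap A B)) (maximalIdeal A)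
      ((maximalIdeal A).map ((Ideal.Quotient.mk P).comp (algebraMap A B)))
      (fun _ ha => Ideal.mem_map_of_mem _ ha))).radical (R := GrLocalRing A)

/-- For a standard graded algebra `S` whose degree-one homogeneous elements form the set
`lin` (so that the irrelevant ideal is `span lin`), the scheme `Proj S` is reduced if and
only if every nilpotent of `S` is annihilated by a power of the irrelevant ideal. -/
def ProjIsReduced (S : Type*) [CommRing S] (lin : Set S) : Prop :=
  ∀ x : S, IsNilpotent x → ∃ n : ℕ, ∀ y ∈ (Ideal.span lin) ^ n, y * x = 0

/-- The closed point of the one-dimensional reduced affine scheme `Spec A` is *ordinary*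
if `Proj (G(A) ⊗_{k(𝔪)} K)` is reduced, `K` an algebraic closure of the residue field. -/
def OrdinaryClosedPoint (A : Type*) [CommRing A] [IsLocalRing A] : Prop :=
  @ProjIsReduced (GrLocalRingBar A)
    (Algebra.TensorProduct.instCommRing (R := ResidueField A)
      (A := AlgebraicClosure (ResidueField A)) (B := GrLocalRing A)) (grBarDegSet A 1)

/-- A closed point (with local ring `A`) of a variety is an *ordinary point* for the
multiplicity `e` if the tangent cone at it is, as a set, the union of `e` distinct linear
varieties, i.e. if `G(A)` has exactly `e` minimal primes, each generated by linear
forms. -/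
def OrdinaryPoint (A : Type*) [CommRing A] [IsLocalRing A] (e : ℕ) : Prop :=
  (minimalPrimes (GrLocalRing A)).ncard = e ∧
    ∀ q ∈ minimalPrimes (GrLocalRing A), IsGeneratedByLinearForms A (maximalIdeal A) q

/-- A (reduced) ring `A` is *seminormal* if it is seminormal in its normalization:
whenever `b` is an element of the integral closure of `A` in its total fraction ring with
`b² , b³ ∈ A`, already `b ∈ A`. -/
def IsSeminormal (A : Type*) [CommRing A] : Prop :=
  ∀ b : FractionRing A, b ∈ integralClosure A (FractionRing A) →
    b ^ 2 ∈ (algebraMap A (FractionRing A)).range →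
    b ^ 3 ∈ (algebraMap A (FractionRing A)).range →
    b ∈ (algebraMap A (FractionRing A)).range

end MoreDefs

section Deg1

/-- The degree-one element of the associated graded ring `G_I(R)` determined by an
element `z ∈ I` (i.e. the class of `z` in `I/I²`, viewed as a linear form on the cone
`Spec G_I(R)`). -/
noncomputable def grDeg1 {R : Type*} [CommRing R] (I : Ideal R) (z : R) (hz : z ∈ I) :
    GrRing R I :=
  Ideal.Quotient.mk (grIdeal R I)
    ⟨Polynomial.monomial 1 z, reesAlgebra.monomial_mem.mpr (by simpa using hz)⟩

end Deg1

section AuxProof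

theorem aux_smul_top_eq_bot {A M : Type*} [CommRing A] [AddCommGroup M] [Module A M]
    {I : Ideal A} (h : Module.IsTorsionBySet A M I) : I • (⊤ : Submodule A M) = ⊥ := by
  rw [eq_bot_iff]
  refine Submodule.smul_le.mpr fun r hr x _ => ?_
  simpa using h (a := ⟨r, hr⟩)

theorem aux_localized'_ideal_eq {A S : Type*} [CommRing A] [CommRing S] [Algebra A S]
    (W : Submonoid A) [IsLocalization W S] (I : Ideal A) :
    Submodule.localized' S W (Algebra.linearMap A S) I = I.map (algebraMap A S) := by
  conv_lhs => rw [← Submodule.span_eq I]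
  rw [Submodule.localized'_span]
  conv_rhs => rw [← Ideal.span_eq I, Ideal.map_span]
  rfl

theorem aux_localized'_smul_top {A S Mo N : Type*} [CommRing A] [CommRing S] [Algebra A S]
    [AddCommGroup Mo] [Module A Mo] [AddCommGroup N] [Module A N] [Module S N]
    [IsScalarTower A S N]
    (W : Submonoid A) [IsLocalization W S] (f : Mo →ₗ[A] N) [IsLocalizedModule W f]
    (I : Ideal A) :
    Submodule.localized' S W f (I • (⊤ : Submodule A Mo)) =
      (I.map (algebraMap A S)) • (⊤ : Submodule S N) := by
  apply le_antisymm
  · rintro x ⟨m, hm, s, rfl⟩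
    have hu : IsUnit (algebraMap A S (s : A)) := IsLocalization.map_units S s
    have h1 : (algebraMap A S (s : A)) • IsLocalizedModule.mk' f m s = f m := by
      rw [algebraMap_smul]
      exact IsLocalizedModule.mk'_cancel' f m s
    have h2 : f m ∈ (I.map (algebraMap A S)) • (⊤ : Submodule S N) := by
      refine Submodule.smul_induction_on hm ?_ ?_
      · intro a ha y _
        rw [map_smul, ← algebraMap_smul S a (f y)]
        exact Submodule.smul_mem_smul (Ideal.mem_map_of_mem _ ha) trivial
      · intro x y hx hy
        rw [map_add]; exact add_mem hx hy
    have h3 : IsLocalizedModule.mk' f m s = ((hu.unit⁻¹ : Sˣ) : S) • f m := by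
      rw [← h1, smul_smul, IsUnit.val_inv_mul, one_smul]
    rw [h3]
    exact Submodule.smul_mem _ _ h2
  · refine Submodule.smul_le.mpr fun r hr y _ => ?_
    obtain ⟨⟨m, s⟩, rfl⟩ := IsLocalizedModule.mk'_surjective W f y
    simp only [Function.uncurry_apply_pair]
    have hr' : r ∈ Submodule.span S ((algebraMap A S) '' I) := hr
    refine Submodule.span_induction ?_ ?_ ?_ ?_ hr'
    · rintro _ ⟨a, ha, rfl⟩
      have : (algebraMap A S a) • IsLocalizedModule.mk' f m s
          = IsLocalizedModule.mk' f (a • m) s := by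
        rw [algebraMap_smul, IsLocalizedModule.mk'_smul]
      rw [this]
      exact ⟨a • m, Submodule.smul_mem_smul ha trivial, s, rfl⟩
    · simpa using zero_mem (Submodule.localized' S W f (I • (⊤ : Submodule A Mo)))
    · intro r1 r2 _ _ hx hy
      rw [add_smul]; exact add_mem hx hy
    · intro c r1 _ hx
      rw [smul_assoc]
      exact Submodule.smul_mem _ _ hx

theorem aux_hilbertFn_loc {A : Type*} [CommRing A] (p : Ideal A) [hp : p.IsPrime]
    (S : Type*) [CommRing S] [Algebra A S] [IsLocalization p.primeCompl S] [IsLocalRing S]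
    (hmap : p.map (algebraMap A S) = IsLocalRing.maximalIdeal S) (n : ℕ)
    [Module.Free (A ⧸ p) ((↥(p ^ n)) ⧸ (p • (⊤ : Submodule A ↥(p ^ n))))] :
    hilbertFn S (IsLocalRing.maximalIdeal S) n =
      Module.finrank (A ⧸ p) ((↥(p ^ n)) ⧸ (p • (⊤ : Submodule A ↥(p ^ n)))) := by
  classical
  have hPn : Submodule.localized' S p.primeCompl (Algebra.linearMap A S)
        ((p ^ n : Ideal A) : Submodule A A)
      = ((IsLocalRing.maximalIdeal S ^ n : Ideal S) : Submodule S S) := by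
    rw [aux_localized'_ideal_eq, Ideal.map_pow, hmap]
  set J : Ideal S := IsLocalRing.maximalIdeal S with hJdef
  let f1 := Submodule.toLocalized' S p.primeCompl (Algebra.linearMap A S)
    ((p ^ n : Ideal A) : Submodule A A)
  let eJ := LinearEquiv.ofEq _ _ hPn
  let f2 : ↥(p ^ n) →ₗ[A] ↥(J ^ n) := ↑(eJ.restrictScalars A) ∘ₗ f1
  haveI hf2 : IsLocalizedModule p.primeCompl f2 :=
    IsLocalizedModule.of_linearEquiv p.primeCompl f1 (eJ.restrictScalars A)
  have hsm : Submodule.localized' S p.primeCompl f2 (p • (⊤ : Submodule A ↥(p ^ n)))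
      = (J • (⊤ : Submodule S ↥(J ^ n))) := by
    rw [aux_localized'_smul_top p.primeCompl f2 p, hmap]
  let g0 := Submodule.toLocalizedQuotient' S p.primeCompl f2 (p • (⊤ : Submodule A ↥(p ^ n)))
  let eQ := Submodule.quotEquivOfEq _ _ hsm
  let g2 : ((↥(p ^ n)) ⧸ (p • (⊤ : Submodule A ↥(p ^ n)))) →ₗ[A]
      ((↥(J ^ n)) ⧸ (J • (⊤ : Submodule S ↥(J ^ n)))) := ↑(eQ.restrictScalars A) ∘ₗ g0
  haveI hg2 : IsLocalizedModule p.primeCompl g2 :=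
    IsLocalizedModule.of_linearEquiv p.primeCompl g0 (eQ.restrictScalars A)
  have hbc : IsBaseChange S g2 := (isLocalizedModule_iff_isBaseChange p.primeCompl S g2).mp hg2
  let E := hbc.equiv
  -- the residue field κ := S ⧸ J
  letI algRκ : Algebra (A ⧸ p) (S ⧸ J) := (Ideal.Quotient.lift p
      ((Ideal.Quotient.mk J).comp (algebraMap A S))
      (fun a ha => by
        simp only [RingHom.comp_apply]
        exact Ideal.Quotient.eq_zero_iff_mem.mpr (hmap ▸ Ideal.mem_map_of_mem _ ha))).toAlgebra
  haveI : IsScalarTower A (A ⧸ p) (S ⧸ J) := IsScalarTower.of_algebraMap_eq (fun a => rfl)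
  have hbotV : J • (⊤ : Submodule S ((↥(J ^ n)) ⧸ (J • (⊤ : Submodule S ↥(J ^ n))))) = ⊥ :=
    aux_smul_top_eq_bot (Module.isTorsionBySet_quotient_ideal_smul _ _)
  have e0 : TensorProduct S (S ⧸ J) ((↥(J ^ n)) ⧸ (J • (⊤ : Submodule S ↥(J ^ n))))
      ≃ₗ[S] ((↥(J ^ n)) ⧸ (J • (⊤ : Submodule S ↥(J ^ n)))) :=
    (TensorProduct.quotTensorEquivQuotSMul _ J).trans (Submodule.quotEquivOfEqBot _ hbotV)
  have e0' : TensorProduct S (S ⧸ J) ((↥(J ^ n)) ⧸ (J • (⊤ : Submodule S ↥(J ^ n))))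
      ≃ₗ[S ⧸ J] ((↥(J ^ n)) ⧸ (J • (⊤ : Submodule S ↥(J ^ n)))) :=
    LinearEquiv.extendScalarsOfSurjective Ideal.Quotient.mk_surjective e0
  have e1 : TensorProduct S (S ⧸ J) ((↥(J ^ n)) ⧸ (J • (⊤ : Submodule S ↥(J ^ n))))
      ≃ₗ[S ⧸ J] TensorProduct S (S ⧸ J)
        (TensorProduct A S ((↥(p ^ n)) ⧸ (p • (⊤ : Submodule A ↥(p ^ n))))) :=
    TensorProduct.AlgebraTensorModule.congr (LinearEquiv.refl _ _) E.symm
  have e2 : TensorProduct S (S ⧸ J)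
        (TensorProduct A S ((↥(p ^ n)) ⧸ (p • (⊤ : Submodule A ↥(p ^ n)))))
      ≃ₗ[S ⧸ J] TensorProduct A (S ⧸ J) ((↥(p ^ n)) ⧸ (p • (⊤ : Submodule A ↥(p ^ n)))) :=
    TensorProduct.AlgebraTensorModule.cancelBaseChange A S (S ⧸ J) (S ⧸ J) _
  have hbotM : p • (⊤ : Submodule A ((↥(p ^ n)) ⧸ (p • (⊤ : Submodule A ↥(p ^ n))))) = ⊥ :=
    aux_smul_top_eq_bot (Module.isTorsionBySet_quotient_ideal_smul _ _)
  have eRM0 : TensorProduct A (A ⧸ p) ((↥(p ^ n)) ⧸ (p • (⊤ : Submodule A ↥(p ^ n))))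
      ≃ₗ[A] ((↥(p ^ n)) ⧸ (p • (⊤ : Submodule A ↥(p ^ n)))) :=
    (TensorProduct.quotTensorEquivQuotSMul _ p).trans (Submodule.quotEquivOfEqBot _ hbotM)
  have eRM : TensorProduct A (A ⧸ p) ((↥(p ^ n)) ⧸ (p • (⊤ : Submodule A ↥(p ^ n))))
      ≃ₗ[A ⧸ p] ((↥(p ^ n)) ⧸ (p • (⊤ : Submodule A ↥(p ^ n)))) :=
    LinearEquiv.extendScalarsOfSurjective Ideal.Quotient.mk_surjective eRM0
  have e3 : TensorProduct A (S ⧸ J) ((↥(p ^ n)) ⧸ (p • (⊤ : Submodule A ↥(p ^ n))))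
      ≃ₗ[S ⧸ J] TensorProduct (A ⧸ p) (S ⧸ J)
        ((↥(p ^ n)) ⧸ (p • (⊤ : Submodule A ↥(p ^ n)))) :=
    (TensorProduct.AlgebraTensorModule.cancelBaseChange A (A ⧸ p) (S ⧸ J) (S ⧸ J) _).symm.trans
      (TensorProduct.AlgebraTensorModule.congr (LinearEquiv.refl _ _) eRM)
  have hrank : Module.finrank (S ⧸ J)
        (TensorProduct (A ⧸ p) (S ⧸ J) ((↥(p ^ n)) ⧸ (p • (⊤ : Submodule A ↥(p ^ n)))))
      = Module.finrank (A ⧸ p) ((↥(p ^ n)) ⧸ (p • (⊤ : Submodule A ↥(p ^ n)))) :=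
    Module.finrank_baseChange
  unfold hilbertFn
  rw [(e0'.symm.trans ((e1.trans e2).trans e3)).finrank_eq, hrank]

end AuxProof


/-- Theorem 1.6(b). Let `A` be a Noetherian local ring with residue
field `k`, and `p` a prime of `A` such that `A/p` is regular and `A` is normally flat
along `p`.  Then the graded `k`-algebra `G_p(A) ⊗_{A/p} k` and the graded `k(p)`-algebra
`G(A_p)` have the same Hilbert function:
`dim_k (k ⊗_{A/p} pⁿ/pⁿ⁺¹) = dim_{k(p)} ((pA_p)ⁿ/(pA_p)ⁿ⁺¹)` for all `n`. -/
theorem hilbertFn_fiber_eq_hilbertFn_localization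
    (A : Type*) [CommRing A] [IsLocalRing A] [IsNoetherianRing A]
    (p : Ideal A) [hp : p.IsPrime]
    (hreg : IsRegularLocalRing' (A ⧸ p))
    (hflat : ∀ n : ℕ, Module.Flat (A ⧸ p) (↥(p ^ n) ⧸ (p • (⊤ : Submodule A ↥(p ^ n))))) :
    letI : Algebra (A ⧸ p) (ResidueField A) :=
      (Ideal.Quotient.factor (S := p) (T := maximalIdeal A) (le_maximalIdeal hp.ne_top)).toAlgebra
    ∀ n : ℕ,
      Module.finrank (ResidueField A)
          (TensorProduct (A ⧸ p) (ResidueField A)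
            (↥(p ^ n) ⧸ (p • (⊤ : Submodule A ↥(p ^ n))))) =
        hilbertFn (Localization.AtPrime p) (maximalIdeal (Localization.AtPrime p)) n := by
  letI : Algebra (A ⧸ p) (IsLocalRing.ResidueField A) :=
    (Ideal.Quotient.factor (S := p) (T := IsLocalRing.maximalIdeal A)
      (IsLocalRing.le_maximalIdeal hp.ne_top)).toAlgebra
  intro n
  haveI hloc : IsLocalRing (A ⧸ p) := hreg.1
  haveI := hflat n
  haveI : Module.Finite A ↥(p ^ n) := Module.Finite.iff_fg.mpr (IsNoetherian.noetherian _)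
  haveI : Module.Finite (A ⧸ p) ((↥(p ^ n)) ⧸ (p • (⊤ : Submodule A ↥(p ^ n)))) :=
    Module.Finite.of_restrictScalars_finite A (A ⧸ p) _
  haveI : Module.FinitePresentation (A ⧸ p)
      ((↥(p ^ n)) ⧸ (p • (⊤ : Submodule A ↥(p ^ n)))) :=
    Module.finitePresentation_of_finite _ _
  haveI : Module.Free (A ⧸ p) ((↥(p ^ n)) ⧸ (p • (⊤ : Submodule A ↥(p ^ n)))) :=
    Module.free_of_flat_of_isLocalRing
  rw [aux_hilbertFn_loc p (Localization.AtPrime p)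
    Localization.AtPrime.map_eq_maximalIdeal n]
  exact Module.finrank_baseChange
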